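/- Let M = (m_{ij}) be an n×n Hermitian positive-definite complex matrix. For each i ∈ {1,…,n} choose an index set J_i ⊆ {1,…,i} with i ∈ J_i, and let σ_i be the diagonal entry of (M[J_i,J_i])⁻¹ corresponding to index i. Fix some j with 1 < j ≤ n and let Ĵ_j ⊆ J_j be a subset with j ∈ Ĵ_j, and let σ̂_j be the diagonal entry of (M[Ĵ_j,Ĵ_j])⁻¹ corresponding to index j. Then det(M) ≤ Π_{i=1}^n (1/σ_i) ≤ (1/σ̂_j) · Π_{i=1, i≠j}^n (1/σ_i); that is, enlarging a principal submatrix can only improve the sparse inverse determinant approximation. -/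

import Mathlib

open Matrix
open scoped ComplexOrder

/-- For a principal submatrix `M[J,J]` of `M` and an index `i ∈ J`, the diagonal
entry of `(M[J,J])⁻¹` in the position corresponding to `i`. -/
noncomputable def sigmaEntry {n : ℕ} (M : Matrix (Fin n) (Fin n) ℂ)
    (J : Finset (Fin n)) (i : Fin n) (hi : i ∈ J) : ℂ :=
  (M.submatrix (fun a : J => (a : Fin n)) (fun a : J => (a : Fin n)))⁻¹ ⟨i, hi⟩ ⟨i, hi⟩

namespace SparseAux
variable {n : ℕ}

def subM (M : Matrix (Fin n) (Fin n) ℂ) (S : Finset (Fin n)) : Matrix S S ℂ :=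
  M.submatrix (fun a : S => (a : Fin n)) (fun a : S => (a : Fin n))

lemma sigmaEntry_eq (M : Matrix (Fin n) (Fin n) ℂ) (S : Finset (Fin n)) (i : Fin n)
    (hi : i ∈ S) : sigmaEntry M S i hi = (subM M S)⁻¹ ⟨i, hi⟩ ⟨i, hi⟩ := rfl

lemma ext_dot (A : Matrix (Fin n) (Fin n) ℂ) (S : Finset (Fin n)) (v : S → ℂ) :
    star (fun a : Fin n => if h : a ∈ S then v ⟨a, h⟩ else 0) ⬝ᵥ
      (A *ᵥ fun a : Fin n => if h : a ∈ S then v ⟨a, h⟩ else 0) =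
    star v ⬝ᵥ (subM A S *ᵥ v) := by
  set w : Fin n → ℂ := fun a => if h : a ∈ S then v ⟨a, h⟩ else 0 with hw
  have hv : ∀ p : S, v p = w ↑p := by
    intro p; simp [hw, p.2]
  have hw0 : ∀ a : Fin n, a ∉ S → w a = 0 := by
    intro a ha; simp [hw, ha]
  simp only [dotProduct, mulVec, Pi.star_apply, subM, submatrix_apply]
  rw [← Finset.sum_subset (Finset.subset_univ S)
      (fun a _ ha => by rw [hw0 a ha]; simp)]
  have inner : ∀ a : Fin n, (∑ b : Fin n, A a b * w b) = ∑ b ∈ S, A a b * w b := by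
    intro a
    rw [← Finset.sum_subset (Finset.subset_univ S)
      (fun b _ hb => by rw [hw0 b hb]; simp)]
  rw [Finset.sum_congr rfl (fun a _ => by rw [inner a] :
    ∀ a ∈ S, star (w a) * (∑ b : Fin n, A a b * w b) = star (w a) * ∑ b ∈ S, A a b * w b)]
  have h2 : ∀ a : Fin n, (∑ q : S, A a ↑q * w ↑q) = ∑ b ∈ S, A a b * w b :=
    fun a => Finset.sum_coe_sort S (fun b => A a b * w b)
  simp only [hv, h2]
  exact (Finset.sum_coe_sort S (fun a => star (w a) * ∑ b ∈ S, A a b * w b)).symm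

lemma subM_posDef {M : Matrix (Fin n) (Fin n) ℂ} (hM : M.PosDef) (S : Finset (Fin n)) :
    (subM M S).PosDef := by
  refine Matrix.PosDef.of_dotProduct_mulVec_pos ?_ ?_
  · show (subM M S)ᴴ = subM M S
    unfold subM
    rw [conjTranspose_submatrix, hM.1]
  · intro v hv
    have hne : (fun a : Fin n => if h : a ∈ S then v ⟨a, h⟩ else 0) ≠ 0 := by
      obtain ⟨p, hp⟩ := Function.ne_iff.mp hv
      refine Function.ne_iff.mpr ⟨↑p, ?_⟩
      simpa [p.2] using hp
    have := hM.dotProduct_mulVec_pos hne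
    rwa [ext_dot] at this

lemma diag_pos {m : Type*} [Fintype m] [DecidableEq m] {A : Matrix m m ℂ} (hA : A.PosDef)
    (i : m) : 0 < A i i := by
  have h1 : (Pi.single i 1 : m → ℂ) ≠ 0 := by
    refine Function.ne_iff.mpr ⟨i, by simp⟩
  have := hA.dotProduct_mulVec_pos h1
  simpa [dotProduct, mulVec, Pi.single_apply, Finset.sum_ite_eq, mul_comm] using this


section Key
variable {m : Type*} [Fintype m] [DecidableEq m] {B : Matrix m m ℂ}

lemma sigma_pos (hB : B.PosDef) (i : m) : 0 < B⁻¹ i i := diag_pos hB.inv i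

/-- the minimizer -/
noncomputable def xvec (B : Matrix m m ℂ) (i : m) : m → ℂ :=
  (B⁻¹ i i)⁻¹ • (B⁻¹ *ᵥ (Pi.single i 1 : m → ℂ))

lemma Bx (i : m) (hB : B.PosDef) : B *ᵥ xvec B i = (B⁻¹ i i)⁻¹ • (Pi.single i 1 : m → ℂ) := by
  unfold xvec
  rw [mulVec_smul, mulVec_mulVec, Matrix.mul_nonsing_inv _ (isUnit_iff_isUnit_det _ |>.mp hB.isUnit),
    one_mulVec]

lemma xvec_i (i : m) (hB : B.PosDef) : xvec B i i = 1 := by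
  unfold xvec
  have : (B⁻¹ *ᵥ (Pi.single i 1 : m → ℂ)) i = B⁻¹ i i := by
    simp [mulVec, dotProduct, Pi.single_apply, Finset.sum_ite_eq]
  simp only [Pi.smul_apply, this, smul_eq_mul]
  exact inv_mul_cancel₀ (sigma_pos hB i).ne'

lemma key (i : m) (hB : B.PosDef) (y : m → ℂ) (hy : y i = 1) :
    ((B⁻¹ i i).re)⁻¹ ≤ (star y ⬝ᵥ B *ᵥ y).re := by
  set σ : ℂ := B⁻¹ i i with hσ
  have hσpos : 0 < σ := sigma_pos hB i
  have hσre : 0 < σ.re := (Complex.lt_def.mp hσpos).1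
  have hσim : σ.im = 0 := ((Complex.lt_def.mp hσpos).2).symm
  have hσreal : σ = (σ.re : ℂ) := Complex.ext rfl (by simp [hσim])
  set x := xvec B i with hx
  set z : m → ℂ := y - x with hz
  have hxi : x i = 1 := xvec_i i hB
  have hzi : z i = 0 := by simp [hz, hy, hxi]
  -- star x ⬝ᵥ B *ᵥ v = σ⁻¹ * v i for any v  (via B *ᵥ x and hermitian)
  have hBx : B *ᵥ x = σ⁻¹ • (Pi.single i 1 : m → ℂ) := Bx i hB
  have hxB : star x ᵥ* B = σ⁻¹ • (Pi.single i 1 : m → ℂ) := by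
    have h1 : star (B *ᵥ x) = star x ᵥ* Bᴴ := star_mulVec B x
    rw [hB.1] at h1
    rw [← h1, hBx]
    have : star (σ⁻¹ • (Pi.single i 1 : m → ℂ)) = (star σ⁻¹) • star (Pi.single i 1 : m → ℂ) := by
      simp [star_smul]
    rw [this]
    have h2 : star (Pi.single i 1 : m → ℂ) = Pi.single i 1 := by
      funext a; simp [Pi.single_apply, apply_ite]
    rw [h2]
    congr 1
    rw [hσreal, ← Complex.ofReal_inv]
    exact Complex.conj_ofReal _
  have hq : star y ⬝ᵥ B *ᵥ y = σ⁻¹ + star z ⬝ᵥ B *ᵥ z := by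
    have hy' : y = x + z := by simp [hz]
    have hsz : star y = star x + star z := by rw [hy']; funext a; simp
    rw [hy'] at *
    rw [hsz, mulVec_add, add_dotProduct, dotProduct_add, dotProduct_add]
    have t1 : star x ⬝ᵥ B *ᵥ x = σ⁻¹ := by
      rw [hBx, dotProduct_smul]
      simp [dotProduct, Pi.single_apply, Pi.star_apply, hxi]
    have t2 : star z ⬝ᵥ B *ᵥ x = 0 := by
      rw [hBx, dotProduct_smul]
      have : star z ⬝ᵥ (Pi.single i 1 : m → ℂ) = star (z i) := by
        simp [dotProduct, Pi.single_apply, Pi.star_apply]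
      rw [this, hzi]
      simp
    have t3 : star x ⬝ᵥ B *ᵥ z = 0 := by
      rw [dotProduct_mulVec, hxB]
      have : (σ⁻¹ • (Pi.single i 1 : m → ℂ)) ⬝ᵥ z = σ⁻¹ * z i := by
        simp [dotProduct, Pi.single_apply, smul_eq_mul]
      rw [this, hzi, mul_zero]
    rw [t1, t2, t3, add_zero, zero_add]
  have hzq : 0 ≤ (star z ⬝ᵥ B *ᵥ z).re := by
    have := hB.posSemidef.dotProduct_mulVec_nonneg z
    exact (Complex.le_def.mp this).1
  have hinv : (σ⁻¹).re = (σ.re)⁻¹ := by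
    conv_lhs => rw [hσreal]
    rw [← Complex.ofReal_inv]
    simp
  rw [hq]
  simp only [Complex.add_re, hinv]
  linarith

lemma quad_xvec (i : m) (hB : B.PosDef) :
    star (xvec B i) ⬝ᵥ B *ᵥ xvec B i = (B⁻¹ i i)⁻¹ := by
  rw [Bx i hB, dotProduct_smul]
  simp [dotProduct, Pi.single_apply, Pi.star_apply, xvec_i i hB]

end Key

lemma subM_apply (M : Matrix (Fin n) (Fin n) ℂ) (S : Finset (Fin n)) (a b : S) :
    subM M S a b = M ↑a ↑b := rfl

attribute [irreducible] subM xvec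

lemma pos_re {z : ℂ} (hz : 0 < z) : 0 < z.re := (Complex.lt_def.mp hz).1

lemma real_of_pos {z : ℂ} (hz : 0 < z) : z = (z.re : ℂ) :=
  Complex.ext rfl (by simpa using ((Complex.lt_def.mp hz).2).symm)

lemma inv_re_of_pos {z : ℂ} (hz : 0 < z) : (z⁻¹).re = (z.re)⁻¹ := by
  conv_lhs => rw [real_of_pos hz]
  rw [← Complex.ofReal_inv]
  simp

set_option maxHeartbeats 1000000 in
lemma mono {M : Matrix (Fin n) (Fin n) ℂ} (hM : M.PosDef) {S T : Finset (Fin n)}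
    (hST : S ⊆ T) {i : Fin n} (hiS : i ∈ S) :
    0 < ((subM M S)⁻¹ ⟨i, hiS⟩ ⟨i, hiS⟩).re ∧
    ((subM M S)⁻¹ ⟨i, hiS⟩ ⟨i, hiS⟩).re ≤ ((subM M T)⁻¹ ⟨i, hST hiS⟩ ⟨i, hST hiS⟩).re := by
  have hBS := subM_posDef hM S
  have hBT := subM_posDef hM T
  have hσS : 0 < (subM M S)⁻¹ ⟨i, hiS⟩ ⟨i, hiS⟩ := sigma_pos hBS _
  have hσT : 0 < (subM M T)⁻¹ ⟨i, hST hiS⟩ ⟨i, hST hiS⟩ := sigma_pos hBT _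
  refine ⟨pos_re hσS, ?_⟩
  set x := xvec (subM M S) ⟨i, hiS⟩ with hxdef
  set y : T → ℂ := fun t => if h : (t : Fin n) ∈ S then x ⟨t, h⟩ else 0 with hydef
  have hw' : (fun a : Fin n => if h : a ∈ T then y ⟨a, h⟩ else 0)
      = (fun a : Fin n => if h : a ∈ S then x ⟨a, h⟩ else 0) := by
    funext a
    by_cases hT : a ∈ T
    · simp only [hT, dif_pos, hydef]
    · have hS' : a ∉ S := fun h => hT (hST h)
      simp [hT, hS']
  have hq : star y ⬝ᵥ (subM M T *ᵥ y) = ((subM M S)⁻¹ ⟨i, hiS⟩ ⟨i, hiS⟩)⁻¹ := by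
    rw [← ext_dot M T y, hw', ext_dot M S x, hxdef, quad_xvec _ hBS]
  have hyi : y ⟨i, hST hiS⟩ = 1 := by
    show (if h : i ∈ S then x ⟨i, h⟩ else 0) = 1
    rw [dif_pos hiS]
    exact xvec_i ⟨i, hiS⟩ hBS
  clear_value x y
  have hk := key ⟨i, hST hiS⟩ hBT y hyi
  rw [hq, inv_re_of_pos hσS] at hk
  have h1 : 0 < ((subM M S)⁻¹ ⟨i, hiS⟩ ⟨i, hiS⟩).re := pos_re hσS
  have h2 : 0 < ((subM M T)⁻¹ ⟨i, hST hiS⟩ ⟨i, hST hiS⟩).re := pos_re hσT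
  exact (inv_le_inv₀ h2 h1).mp hk


/-- prefix principal submatrix -/
def Pmat (M : Matrix (Fin n) (Fin n) ℂ) (k : ℕ) (h : k ≤ n) : Matrix (Fin k) (Fin k) ℂ :=
  M.submatrix (Fin.castLE h) (Fin.castLE h)

/-- prefix index set -/
def Sk (n k : ℕ) : Finset (Fin n) := Finset.univ.filter (fun a : Fin n => a.val < k)

lemma mem_Sk {k : ℕ} {a : Fin n} : a ∈ Sk n k ↔ a.val < k := by simp [Sk]

/-- the equivalence between `Fin k` and the prefix index set -/
def eSk (k : ℕ) (h : k ≤ n) : Fin k ≃ {x // x ∈ Sk n k} where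
  toFun b := ⟨Fin.castLE h b, mem_Sk.mpr b.isLt⟩
  invFun s := ⟨(s : Fin n).val, mem_Sk.mp s.2⟩
  left_inv b := rfl
  right_inv s := by ext; rfl

lemma subM_Sk (M : Matrix (Fin n) (Fin n) ℂ) (k : ℕ) (h : k ≤ n) :
    subM M (Sk n k) = (Pmat M k h).submatrix (eSk k h).symm (eSk k h).symm := by
  ext a b
  rw [subM_apply]
  simp only [submatrix_apply, Pmat]
  congr 1 <;> exact (Fin.ext rfl)

lemma subM_Sk_inv_entry (M : Matrix (Fin n) (Fin n) ℂ) (k : ℕ) (h : k ≤ n)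
    (a : {x // x ∈ Sk n k}) :
    (subM M (Sk n k))⁻¹ a a = (Pmat M k h)⁻¹ ((eSk k h).symm a) ((eSk k h).symm a) := by
  rw [subM_Sk M k h, inv_submatrix_equiv]
  rfl

lemma Pmat_det_pos {M : Matrix (Fin n) (Fin n) ℂ} (hM : M.PosDef) (k : ℕ) (h : k ≤ n) :
    0 < (Pmat M k h).det := by
  have h1 : (Pmat M k h).det = (subM M (Sk n k)).det := by
    rw [subM_Sk M k h, det_submatrix_equiv_self]
  rw [h1] at *
  rw [h1]
  exact (subM_posDef hM (Sk n k)).det_pos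

/-- one-step cofactor identity -/
lemma step (M : Matrix (Fin n) (Fin n) ℂ) (k : ℕ) (h : k + 1 ≤ n) :
    (Pmat M (k+1) h)⁻¹ (Fin.last k) (Fin.last k)
      = ((Pmat M (k+1) h).det)⁻¹ * (Pmat M k (Nat.le_of_succ_le h)).det := by
  rw [Matrix.inv_def]
  simp only [Pi.smul_apply, Matrix.smul_apply, smul_eq_mul, Ring.inverse_eq_inv']
  congr 1
  rw [adjugate_fin_succ_eq_det_submatrix]
  have hsign : ((-1 : ℂ)) ^ ((Fin.last k : ℕ) + (Fin.last k : ℕ)) = 1 := by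
    rw [← two_mul, pow_mul]
    norm_num
  rw [hsign, one_mul]
  congr 1
  rw [Fin.succAbove_last]
  unfold Pmat
  rw [submatrix_submatrix]
  congr 1 <;> (funext b; exact Fin.ext rfl)


noncomputable def dseq (M : Matrix (Fin n) (Fin n) ℂ) (k : ℕ) : ℝ :=
  if h : k ≤ n then ((Pmat M k h).det).re else 1

lemma dseq_pos {M : Matrix (Fin n) (Fin n) ℂ} (hM : M.PosDef) (k : ℕ) : 0 < dseq M k := by
  unfold dseq; split
  · exact pos_re ((Pmat_det_pos hM _ _))
  · norm_num

lemma dseq_zero (M : Matrix (Fin n) (Fin n) ℂ) : dseq M 0 = 1 := by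
  unfold dseq
  rw [dif_pos (Nat.zero_le n)]
  simp [Matrix.det_fin_zero]

lemma dseq_n (M : Matrix (Fin n) (Fin n) ℂ) : dseq M n = M.det.re := by
  unfold dseq
  rw [dif_pos le_rfl]
  have : Pmat M n le_rfl = M := by
    unfold Pmat
    have h2 : Fin.castLE (le_refl n) = id := funext fun b => Fin.ext rfl
    rw [h2, submatrix_id_id]
  rw [this]

lemma tau_re (M : Matrix (Fin n) (Fin n) ℂ) (hM : M.PosDef) (i : Fin n)
    (hi : i ∈ Sk n (i.val+1)) :
    ((subM M (Sk n (i.val+1)))⁻¹ ⟨i, hi⟩ ⟨i, hi⟩).re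
      = (dseq M (i.val+1))⁻¹ * dseq M i.val := by
  have h : i.val + 1 ≤ n := i.isLt
  rw [subM_Sk_inv_entry M _ h]
  have he : (eSk (i.val+1) h).symm ⟨i, hi⟩ = Fin.last i.val := Fin.ext rfl
  rw [he, step M i.val h]
  have hz := Pmat_det_pos hM (i.val+1) h
  have hw := Pmat_det_pos hM i.val (Nat.le_of_succ_le h)
  rw [real_of_pos hz, real_of_pos hw, ← Complex.ofReal_inv, ← Complex.ofReal_mul]
  unfold dseq
  rw [dif_pos h, dif_pos (Nat.le_of_succ_le h)]
  simp

lemma telescope {M : Matrix (Fin n) (Fin n) ℂ} (hM : M.PosDef) :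
    ∀ k, k ≤ n → ∏ i ∈ Finset.range k, (dseq M (i+1) / dseq M i) = dseq M k := by
  intro k
  induction k with
  | zero => intro _; simp [dseq_zero]
  | succ k ih =>
    intro hk
    rw [Finset.prod_range_succ, ih (Nat.le_of_succ_le hk), mul_comm,
      div_mul_cancel₀ _ (dseq_pos hM k).ne']

end SparseAux

open SparseAux in
theorem stmt12 {n : ℕ}
    (M : Matrix (Fin n) (Fin n) ℂ) (hM : M.PosDef)
    (J : Fin n → Finset (Fin n))
    (hmem : ∀ i : Fin n, i ∈ J i)
    (hle : ∀ i : Fin n, ∀ j ∈ J i, j ≤ i)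
    (j : Fin n) (hj : 0 < (j : ℕ))
    (Jhat : Finset (Fin n)) (hsub : Jhat ⊆ J j) (hjhat : j ∈ Jhat) :
    M.det.re ≤ ∏ i : Fin n, (1 / (sigmaEntry M (J i) i (hmem i)).re) ∧
      ∏ i : Fin n, (1 / (sigmaEntry M (J i) i (hmem i)).re) ≤
        (1 / (sigmaEntry M Jhat j hjhat).re) *
          ∏ i ∈ Finset.univ.erase j, (1 / (sigmaEntry M (J i) i (hmem i)).re) := by
  have hσmono := fun (i : Fin n) =>
    mono hM (show J i ⊆ Sk n (i.val+1) from fun a ha => mem_Sk.mpr (Nat.lt_succ_of_le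
      (hle i a ha))) (hmem i)
  have hσpos : ∀ i : Fin n, 0 < (sigmaEntry M (J i) i (hmem i)).re := by
    intro i; rw [sigmaEntry_eq]; exact (hσmono i).1
  constructor
  · -- det bound
    have hτ : ∀ i : Fin n,
        dseq M (i.val+1) / dseq M i.val ≤ 1 / (sigmaEntry M (J i) i (hmem i)).re := by
      intro i
      have hi : i ∈ Sk n (i.val+1) := mem_Sk.mpr (Nat.lt_succ_self _)
      have h2 := (hσmono i).2
      have h3 := tau_re M hM i hi
      have heq : dseq M (i.val+1) / dseq M i.val
          = 1 / ((subM M (Sk n (i.val+1)))⁻¹ ⟨i, hi⟩ ⟨i, hi⟩).re := by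
        rw [h3, one_div, mul_inv, inv_inv, div_eq_mul_inv]
      rw [heq]
      refine one_div_le_one_div_of_le ?_ ?_
      · rw [sigmaEntry_eq]; exact (hσmono i).1
      · rw [sigmaEntry_eq]; exact h2
    calc M.det.re = dseq M n := (dseq_n M).symm
      _ = ∏ i ∈ Finset.range n, (dseq M (i+1) / dseq M i) := (telescope hM n le_rfl).symm
      _ = ∏ i : Fin n, (dseq M (i.val+1) / dseq M i.val) :=
          (Fin.prod_univ_eq_prod_range (fun k => dseq M (k+1) / dseq M k) n).symm
      _ ≤ ∏ i : Fin n, (1 / (sigmaEntry M (J i) i (hmem i)).re) := by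
          refine Finset.prod_le_prod (fun i _ => ?_) (fun i _ => hτ i)
          exact div_nonneg (dseq_pos hM _).le (dseq_pos hM _).le
  · -- enlargement bound
    have hmono2 := mono hM hsub hjhat
    have hfac : 1 / (sigmaEntry M (J j) j (hmem j)).re
        ≤ 1 / (sigmaEntry M Jhat j hjhat).re := by
      rw [sigmaEntry_eq, sigmaEntry_eq]
      exact one_div_le_one_div_of_le hmono2.1 hmono2.2
    rw [← Finset.mul_prod_erase Finset.univ _ (Finset.mem_univ j)]
    refine mul_le_mul_of_nonneg_right hfac ?_
    exact Finset.prod_nonneg fun i _ => one_div_nonneg.mpr (hσpos i).le
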